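/- For n = 3m+1 and x ∈ {0,1}^n, let f_i = x_i for 1 ≤ i ≤ m+1, and for 1 ≤ i ≤ m+2 let g_i = [∑_{j=m+2}^{n} x_j ≥ ⌈(m-1)/2⌉ + i - 1]. Then the majority of these 2m+3 gate values equals MAJ_n(x), i.e., [∑_{i=1}^{m+1} x_i + ∑_{i=1}^{m+2} g_i ≥ (2m+3)/2] = [∑_{j=1}^{n} x_j ≥ n/2]. -/

import Mathlib

/-- Case `n = 3m + 1` of the depth-two majority circuit.
Gates: `f_i = x_i` for `1 ≤ i ≤ m+1`, and `g_i = [sum_M(x) ≥ ⌈(m-1)/2⌉ + i - 1]`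
for `1 ≤ i ≤ m+2`, where `M = {m+2, …, n}`.  The majority of these `2m+3` gate
values equals `MAJ_n(x)`. -/
theorem maj_circuit_case_mod1 (n m : ℕ) (hn : n = 3 * m + 1) (x : ℕ → Bool) :
    (((∑ i ∈ Finset.Icc 1 (m + 1), (if x i then 1 else 0)) +
        ∑ i ∈ Finset.Icc 1 (m + 2),
          (if ((∑ j ∈ Finset.Icc (m + 2) n, (if x j then 1 else 0) : ℕ) : ℤ) ≥
              ⌈((m : ℚ) - 1) / 2⌉ + i - 1 then 1 else 0) : ℕ) : ℚ) ≥
        (2 * (m : ℚ) + 3) / 2 ↔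
      ((∑ j ∈ Finset.Icc 1 n, (if x j then 1 else 0) : ℕ) : ℚ) ≥ (n : ℚ) / 2 := by
  subst hn
  set a : ℕ := ∑ i ∈ Finset.Icc 1 (m + 1), (if x i then 1 else 0) with ha
  set b : ℕ := ∑ j ∈ Finset.Icc (m + 2) (3 * m + 1), (if x j then 1 else 0) with hb
  -- ceiling value
  have hceil : ⌈((m : ℚ) - 1) / 2⌉ = ((m / 2 : ℕ) : ℤ) := by
    rcases Nat.even_or_odd m with ⟨k, hk⟩ | ⟨k, hk⟩
    · subst hk
      rw [show (k + k) / 2 = k by omega, Int.ceil_eq_iff]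
      push_cast
      constructor <;> linarith
    · subst hk
      rw [show (2 * k + 1) / 2 = k by omega, Int.ceil_eq_iff]
      push_cast
      constructor <;> linarith
  -- gate sum
  have hG : (∑ i ∈ Finset.Icc 1 (m + 2),
      (if ((b : ℕ) : ℤ) ≥ ⌈((m : ℚ) - 1) / 2⌉ + i - 1 then 1 else 0) : ℕ)
      = min (m + 2) (b + 1 - m / 2) := by
    rw [Finset.sum_ite, Finset.sum_const, Finset.sum_const]
    simp only [smul_eq_mul, mul_one, mul_zero, add_zero]
    rw [show min (m + 2) (b + 1 - m / 2) = (Finset.Icc 1 (min (m + 2) (b + 1 - m / 2))).card by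
      rw [Nat.card_Icc]; omega]
    congr 1
    ext i
    simp only [Finset.mem_filter, Finset.mem_Icc, hceil]
    constructor
    · rintro ⟨⟨h1, h2⟩, h3⟩
      refine ⟨h1, ?_⟩
      have h4 : (i : ℤ) + (m / 2 : ℕ) ≤ (b : ℤ) + 1 := by linarith
      have h5 : i + m / 2 ≤ b + 1 := by exact_mod_cast h4
      omega
    · rintro ⟨h1, h2⟩
      have h3 : i + m / 2 ≤ b + 1 := by omega
      have h4 : (i : ℤ) + (m / 2 : ℕ) ≤ (b : ℤ) + 1 := by exact_mod_cast h3
      exact ⟨⟨h1, by omega⟩, by linarith⟩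
  -- bounds
  have hab : a ≤ m + 1 := by
    calc a ≤ ∑ i ∈ Finset.Icc 1 (m + 1), 1 := by
            apply Finset.sum_le_sum; intro i _; split <;> omega
      _ = m + 1 := by simp
  have hbb : b ≤ 2 * m := by
    calc b ≤ ∑ j ∈ Finset.Icc (m + 2) (3 * m + 1), 1 := by
            apply Finset.sum_le_sum; intro i _; split <;> omega
      _ = 2 * m := by rw [Finset.sum_const, smul_eq_mul, mul_one, Nat.card_Icc]; omega
  -- split the total sum
  have hsplit : (∑ j ∈ Finset.Icc 1 (3 * m + 1), (if x j then 1 else 0) : ℕ) = a + b := by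
    rw [ha, hb, show Finset.Icc 1 (3 * m + 1) = Finset.Ioc 0 (3 * m + 1) by
        rw [← Finset.Icc_add_one_left_eq_Ioc]; rfl,
      show Finset.Icc 1 (m + 1) = Finset.Ioc 0 (m + 1) by rw [← Finset.Icc_add_one_left_eq_Ioc]; rfl,
      show Finset.Icc (m + 2) (3 * m + 1) = Finset.Ioc (m + 1) (3 * m + 1) by
        rw [← Finset.Icc_add_one_left_eq_Ioc]; rfl]
    rw [← Finset.sum_Ioc_consecutive _ (by omega : 0 ≤ m + 1) (by omega : m + 1 ≤ 3 * m + 1)]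
  rw [hG, hsplit]
  set G : ℕ := min (m + 2) (b + 1 - m / 2) with hGdef
  -- turn rational inequalities into nat ones
  have h1 : (((a + G : ℕ) : ℚ) ≥ (2 * (m : ℚ) + 3) / 2) ↔ 2 * (a + G) ≥ 2 * m + 3 := by
    rw [ge_iff_le, div_le_iff₀ (by norm_num : (0:ℚ) < 2),
      show (2 * (m : ℚ) + 3) = ((2 * m + 3 : ℕ) : ℚ) by push_cast; ring,
      show ((a + G : ℕ) : ℚ) * 2 = (((a + G) * 2 : ℕ) : ℚ) by push_cast; ring,
      Nat.cast_le]
    omega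
  have h2 : (((a + b : ℕ) : ℚ) ≥ ((3 * m + 1 : ℕ) : ℚ) / 2) ↔ 2 * (a + b) ≥ 3 * m + 1 := by
    rw [ge_iff_le, div_le_iff₀ (by norm_num : (0:ℚ) < 2),
      show ((a + b : ℕ) : ℚ) * 2 = (((a + b) * 2 : ℕ) : ℚ) by push_cast; ring,
      Nat.cast_le]
    omega
  rw [h1, h2]
  omega
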